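/- Let P⁺ and P⁻ be finite sets of propositional variables, let M0 and M1 be Kripke models, let w0 be a final world of M0 with cluster C0, and let w1 be a final world of M1 with cluster C1. If (M0,w0) →₁^{(P⁺,P⁻)} (M1,w1), then C0 matches C1. -/

import Mathlib

/-- Modal formulas over countably many variables. -/
inductive ModalForm : Type where
  | var : ℕ → ModalForm
  | bot : ModalForm
  | and : ModalForm → ModalForm → ModalForm
  | or : ModalForm → ModalForm → ModalForm
  | not : ModalForm → ModalForm
  | imp : ModalForm → ModalForm → ModalForm
  | box : ModalForm → ModalForm

namespace ModalForm

mutual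
  /-- positively occurring variables -/
  def vpos : ModalForm → Finset ℕ
    | var p => {p}
    | bot => ∅
    | and φ ψ => vpos φ ∪ vpos ψ
    | or φ ψ => vpos φ ∪ vpos ψ
    | not φ => vneg φ
    | imp φ ψ => vneg φ ∪ vpos ψ
    | box φ => vpos φ
  /-- negatively occurring variables -/
  def vneg : ModalForm → Finset ℕ
    | var _ => ∅
    | bot => ∅
    | and φ ψ => vneg φ ∪ vneg ψ
    | or φ ψ => vneg φ ∪ vneg ψ
    | not φ => vpos φ
    | imp φ ψ => vpos φ ∪ vneg ψ
    | box φ => vneg φ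
end

/-- Modal depth: maximal nesting of `□`. -/
def depth : ModalForm → ℕ
  | var _ => 0
  | bot => 0
  | and φ ψ => max (depth φ) (depth ψ)
  | or φ ψ => max (depth φ) (depth ψ)
  | not φ => depth φ
  | imp φ ψ => max (depth φ) (depth ψ)
  | box φ => depth φ + 1

/-- `◇φ := ¬□¬φ` -/
def dia (φ : ModalForm) : ModalForm := not (box (not φ))

/-- `⊤ := ¬⊥` -/
def top : ModalForm := not bot

end ModalForm

/-- An S4 Kripke frame: nonempty set of worlds with a reflexive transitive relation. -/
structure KFrame : Type 1 where
  W : Type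
  R : W → W → Prop
  nonempty : Nonempty W
  refl : ∀ x, R x x
  trans : ∀ x y z, R x y → R y z → R x z

/-- A Kripke model: a frame with a valuation. -/
structure KModel : Type 1 extends KFrame where
  val : W → ℕ → Prop

/-- The model based on frame `F` with valuation `V`. -/
def KFrame.toModel (F : KFrame) (V : F.W → ℕ → Prop) : KModel :=
  { toKFrame := F, val := V }

/-- Satisfaction in a Kripke model. -/
def KModel.Sat (M : KModel) : M.W → ModalForm → Prop
  | w, .var p => M.val w p
  | _, .bot => False
  | w, .and φ ψ => M.Sat w φ ∧ M.Sat w ψ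
  | w, .or φ ψ => M.Sat w φ ∨ M.Sat w ψ
  | w, .not φ => ¬ M.Sat w φ
  | w, .imp φ ψ => M.Sat w φ → M.Sat w ψ
  | w, .box φ => ∀ y, M.R w y → M.Sat y φ

/-- `(M0,w0) →ₙ^{(P⁺,P⁻)} (M1,w1)`: every `(P⁺,P⁻)`-formula of depth ≤ n
satisfied at `(M0,w0)` is satisfied at `(M1,w1)`. -/
def ModalArrow (Pp Pm : Finset ℕ) (n : ℕ) (M0 : KModel) (w0 : M0.W)
    (M1 : KModel) (w1 : M1.W) : Prop :=
  ∀ φ : ModalForm, φ.vpos ⊆ Pp → φ.vneg ⊆ Pm → φ.depth ≤ n →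
    M0.Sat w0 φ → M1.Sat w1 φ

/-- p-morphism between frames. -/
def PMorphism (F G : KFrame) (f : F.W → G.W) : Prop :=
  (∀ x y, F.R x y → G.R (f x) (f y)) ∧
  (∀ x w, G.R (f x) w → ∃ z, F.R x z ∧ f z = w)

/-- The class `C` of Kripke models enjoys `n`-IP. -/
def EnjoysIP (C : Set KModel) (n : ℕ) : Prop :=
  ∀ (Pp Pm : Finset ℕ) (M0 M1 : KModel), M0 ∈ C → M1 ∈ C →
    ∀ (w0 : M0.W) (w1 : M1.W), ModalArrow Pp Pm n M0 w0 M1 w1 →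
      ∃ (F : KFrame) (wstar : F.W) (f0 : F.W → M0.W) (f1 : F.W → M1.W),
        (∀ V : F.W → ℕ → Prop, F.toModel V ∈ C) ∧
        PMorphism F M0.toKFrame f0 ∧
        PMorphism F M1.toKFrame f1 ∧
        f0 wstar = w0 ∧ f1 wstar = w1 ∧
        ∀ x : F.W, ModalArrow Pp Pm 0 M0 (f0 x) M1 (f1 x)

/-- A world is final iff every successor is also a predecessor. -/
def KModel.Final (M : KModel) (w : M.W) : Prop := ∀ y, M.R w y → M.R y w

/-- The cluster of a world. -/
def KModel.cluster (M : KModel) (w : M.W) : Set M.W := {u | M.R w u ∧ M.R u w}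

/-- Cluster `C0` of `M0` matches cluster `C1` of `M1`. -/
def Matches (Pp Pm : Finset ℕ) (M0 M1 : KModel) (C0 : Set M0.W) (C1 : Set M1.W) : Prop :=
  (∀ u0 ∈ C0, ∃ u1 ∈ C1, ModalArrow Pp Pm 0 M0 u0 M1 u1) ∧
  (∀ u1 ∈ C1, ∃ u0 ∈ C0, ModalArrow Pp Pm 0 M0 u0 M1 u1)

/-- `φ` is satisfied at every world of every model in `C`. -/
def ValidOn (C : Set KModel) (φ : ModalForm) : Prop :=
  ∀ M ∈ C, ∀ w : M.W, M.Sat w φ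


namespace ModalForm

/-- Finite conjunction. -/
def conj : List ModalForm → ModalForm
  | [] => .not .bot
  | φ :: l => .and φ (conj l)

/-- Finite disjunction. -/
def disj : List ModalForm → ModalForm
  | [] => .bot
  | φ :: l => .or φ (disj l)

lemma sat_conj (M : KModel) (w : M.W) : ∀ l, M.Sat w (conj l) ↔ ∀ φ ∈ l, M.Sat w φ
  | [] => by simp [conj, KModel.Sat]
  | φ :: l => by simp [conj, KModel.Sat, sat_conj M w l]

lemma sat_disj (M : KModel) (w : M.W) : ∀ l, M.Sat w (disj l) ↔ ∃ φ ∈ l, M.Sat w φ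
  | [] => by simp [disj, KModel.Sat]
  | φ :: l => by simp [disj, KModel.Sat, sat_disj M w l]

lemma vpos_conj : ∀ l p, p ∈ (conj l).vpos → ∃ φ ∈ l, p ∈ φ.vpos
  | [], p => by simp [conj, vpos, vneg]
  | φ :: l, p => by
    simp only [conj, vpos, Finset.mem_union, List.mem_cons]
    rintro (h | h)
    · exact ⟨φ, Or.inl rfl, h⟩
    · obtain ⟨ψ, hψ, hp⟩ := vpos_conj l p h
      exact ⟨ψ, Or.inr hψ, hp⟩

lemma vneg_conj : ∀ l p, p ∈ (conj l).vneg → ∃ φ ∈ l, p ∈ φ.vneg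
  | [], p => by simp [conj, vpos, vneg]
  | φ :: l, p => by
    simp only [conj, vneg, Finset.mem_union, List.mem_cons]
    rintro (h | h)
    · exact ⟨φ, Or.inl rfl, h⟩
    · obtain ⟨ψ, hψ, hp⟩ := vneg_conj l p h
      exact ⟨ψ, Or.inr hψ, hp⟩

lemma vpos_disj : ∀ l p, p ∈ (disj l).vpos → ∃ φ ∈ l, p ∈ φ.vpos
  | [], p => by simp [disj, vpos]
  | φ :: l, p => by
    simp only [disj, vpos, Finset.mem_union, List.mem_cons]
    rintro (h | h)
    · exact ⟨φ, Or.inl rfl, h⟩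
    · obtain ⟨ψ, hψ, hp⟩ := vpos_disj l p h
      exact ⟨ψ, Or.inr hψ, hp⟩

lemma vneg_disj : ∀ l p, p ∈ (disj l).vneg → ∃ φ ∈ l, p ∈ φ.vneg
  | [], p => by simp [disj, vneg]
  | φ :: l, p => by
    simp only [disj, vneg, Finset.mem_union, List.mem_cons]
    rintro (h | h)
    · exact ⟨φ, Or.inl rfl, h⟩
    · obtain ⟨ψ, hψ, hp⟩ := vneg_disj l p h
      exact ⟨ψ, Or.inr hψ, hp⟩

lemma depth_conj : ∀ l, (∀ φ ∈ l, depth φ = 0) → depth (conj l) = 0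
  | [], _ => rfl
  | φ :: l, h => by
    simp only [conj, depth, Nat.max_eq_zero_iff]
    exact ⟨h φ List.mem_cons_self, depth_conj l fun ψ hψ => h ψ (List.mem_cons_of_mem _ hψ)⟩

lemma depth_disj : ∀ l, (∀ φ ∈ l, depth φ = 0) → depth (disj l) = 0
  | [], _ => rfl
  | φ :: l, h => by
    simp only [disj, depth, Nat.max_eq_zero_iff]
    exact ⟨h φ List.mem_cons_self, depth_disj l fun ψ hψ => h ψ (List.mem_cons_of_mem _ hψ)⟩

/-- Monotonicity: depth-0 formulas transfer along world pairs that agree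
monotonically on positive and antitonically on negative variables. -/
lemma mono : ∀ (φ : ModalForm), φ.depth = 0 → ∀ (M0 M1 : KModel) (u0 : M0.W) (u1 : M1.W),
    (∀ p ∈ φ.vpos, M0.val u0 p → M1.val u1 p) →
    (∀ p ∈ φ.vneg, M1.val u1 p → M0.val u0 p) →
    M0.Sat u0 φ → M1.Sat u1 φ := by
  intro φ
  induction φ with
  | var p =>
    intro _ M0 M1 u0 u1 hp _ hs
    exact hp p (by simp [vpos]) hs
  | bot => intro _ _ _ _ _ _ _ hs; exact hs.elim
  | and φ ψ ihφ ihψ =>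
    intro hd M0 M1 u0 u1 hp hn hs
    simp only [depth, Nat.max_eq_zero_iff] at hd
    exact ⟨ihφ hd.1 M0 M1 u0 u1 (fun p h => hp p (Finset.mem_union_left _ h))
        (fun p h => hn p (Finset.mem_union_left _ h)) hs.1,
      ihψ hd.2 M0 M1 u0 u1 (fun p h => hp p (Finset.mem_union_right _ h))
        (fun p h => hn p (Finset.mem_union_right _ h)) hs.2⟩
  | or φ ψ ihφ ihψ =>
    intro hd M0 M1 u0 u1 hp hn hs
    simp only [depth, Nat.max_eq_zero_iff] at hd
    rcases hs with hs | hs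
    · exact Or.inl (ihφ hd.1 M0 M1 u0 u1 (fun p h => hp p (Finset.mem_union_left _ h))
        (fun p h => hn p (Finset.mem_union_left _ h)) hs)
    · exact Or.inr (ihψ hd.2 M0 M1 u0 u1 (fun p h => hp p (Finset.mem_union_right _ h))
        (fun p h => hn p (Finset.mem_union_right _ h)) hs)
  | not φ ih =>
    intro hd M0 M1 u0 u1 hp hn hs hcon
    exact hs (ih hd M1 M0 u1 u0 hn hp hcon)
  | imp φ ψ ihφ ihψ =>
    intro hd M0 M1 u0 u1 hp hn hs h1
    simp only [depth, Nat.max_eq_zero_iff] at hd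
    have h0 : M0.Sat u0 φ := ihφ hd.1 M1 M0 u1 u0
      (fun p h => hn p (Finset.mem_union_left _ h))
      (fun p h => hp p (Finset.mem_union_left _ h)) h1
    exact ihψ hd.2 M0 M1 u0 u1 (fun p h => hp p (Finset.mem_union_right _ h))
      (fun p h => hn p (Finset.mem_union_right _ h)) (hs h0)
  | box φ _ => intro hd; simp [depth] at hd

open Classical in
/-- Characteristic depth-0 formula of a world. -/
noncomputable def chi (M : KModel) (u : M.W) (Pp Pm : Finset ℕ) : ModalForm :=
  conj (Pp.toList.map (fun p => if M.val u p then .var p else .not .bot)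
    ++ Pm.toList.map (fun p => if M.val u p then .not .bot else .not (.var p)))

open Classical in
noncomputable def theta (M : KModel) (u : M.W) (Pp Pm : Finset ℕ) : ModalForm :=
  disj (Pp.toList.map (fun p => if M.val u p then .bot else .var p)
    ++ Pm.toList.map (fun p => if M.val u p then .not (.var p) else .bot))

end ModalForm

open ModalForm

lemma chi_vpos (M : KModel) (u : M.W) (Pp Pm : Finset ℕ) : (chi M u Pp Pm).vpos ⊆ Pp := by
  intro p hp
  obtain ⟨φ, hφ, hp'⟩ := vpos_conj _ p hp
  simp only [List.mem_append, List.mem_map, Finset.mem_toList] at hφ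
  rcases hφ with ⟨q, hq, rfl⟩ | ⟨q, hq, rfl⟩ <;> split at hp' <;> simp_all [vpos, vneg]

lemma chi_vneg (M : KModel) (u : M.W) (Pp Pm : Finset ℕ) : (chi M u Pp Pm).vneg ⊆ Pm := by
  intro p hp
  obtain ⟨φ, hφ, hp'⟩ := vneg_conj _ p hp
  simp only [List.mem_append, List.mem_map, Finset.mem_toList] at hφ
  rcases hφ with ⟨q, hq, rfl⟩ | ⟨q, hq, rfl⟩ <;> split at hp' <;> simp_all [vpos, vneg]

lemma chi_depth (M : KModel) (u : M.W) (Pp Pm : Finset ℕ) : (chi M u Pp Pm).depth = 0 := by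
  apply depth_conj
  intro φ hφ
  simp only [List.mem_append, List.mem_map, Finset.mem_toList] at hφ
  rcases hφ with ⟨q, _, rfl⟩ | ⟨q, _, rfl⟩ <;> split <;> rfl

lemma chi_self (M : KModel) (u : M.W) (Pp Pm : Finset ℕ) : M.Sat u (chi M u Pp Pm) := by
  rw [chi, sat_conj]
  intro φ hφ
  simp only [List.mem_append, List.mem_map, Finset.mem_toList] at hφ
  rcases hφ with ⟨q, _, rfl⟩ | ⟨q, _, rfl⟩ <;> split <;>
    simp_all [KModel.Sat]

lemma chi_spec (M0 M1 : KModel) (u0 : M0.W) (u1 : M1.W) (Pp Pm : Finset ℕ)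
    (hs : M1.Sat u1 (chi M0 u0 Pp Pm)) :
    (∀ p ∈ Pp, M0.val u0 p → M1.val u1 p) ∧ (∀ p ∈ Pm, M1.val u1 p → M0.val u0 p) := by
  rw [chi, sat_conj] at hs
  constructor
  · intro p hp hv
    have := hs (.var p) (by
      simp only [List.mem_append, List.mem_map, Finset.mem_toList]
      exact Or.inl ⟨p, hp, by simp [hv]⟩)
    exact this
  · intro p hp hv
    by_contra hv0
    have := hs (.not (.var p)) (by
      simp only [List.mem_append, List.mem_map, Finset.mem_toList]
      exact Or.inr ⟨p, hp, by simp [hv0]⟩)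
    exact this hv

/-- depth-0 transfer from the variable condition. -/
lemma arrow0_of_char (M0 M1 : KModel) (u0 : M0.W) (u1 : M1.W) (Pp Pm : Finset ℕ)
    (hp : ∀ p ∈ Pp, M0.val u0 p → M1.val u1 p)
    (hn : ∀ p ∈ Pm, M1.val u1 p → M0.val u0 p) :
    ModalArrow Pp Pm 0 M0 u0 M1 u1 := by
  intro φ hvp hvn hd hs
  exact mono φ (Nat.le_zero.mp hd) M0 M1 u0 u1
    (fun p h => hp p (hvp h)) (fun p h => hn p (hvn h)) hs

lemma theta_vpos (M : KModel) (u : M.W) (Pp Pm : Finset ℕ) : (theta M u Pp Pm).vpos ⊆ Pp := by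
  intro p hp
  obtain ⟨φ, hφ, hp'⟩ := vpos_disj _ p hp
  simp only [List.mem_append, List.mem_map, Finset.mem_toList] at hφ
  rcases hφ with ⟨q, hq, rfl⟩ | ⟨q, hq, rfl⟩ <;> split at hp' <;> simp_all [vpos, vneg]

lemma theta_vneg (M : KModel) (u : M.W) (Pp Pm : Finset ℕ) : (theta M u Pp Pm).vneg ⊆ Pm := by
  intro p hp
  obtain ⟨φ, hφ, hp'⟩ := vneg_disj _ p hp
  simp only [List.mem_append, List.mem_map, Finset.mem_toList] at hφ
  rcases hφ with ⟨q, hq, rfl⟩ | ⟨q, hq, rfl⟩ <;> split at hp' <;> simp_all [vpos, vneg]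

lemma theta_depth (M : KModel) (u : M.W) (Pp Pm : Finset ℕ) : (theta M u Pp Pm).depth = 0 := by
  apply depth_disj
  intro φ hφ
  simp only [List.mem_append, List.mem_map, Finset.mem_toList] at hφ
  rcases hφ with ⟨q, _, rfl⟩ | ⟨q, _, rfl⟩ <;> split <;> rfl

lemma theta_not_self (M : KModel) (u : M.W) (Pp Pm : Finset ℕ) :
    ¬ M.Sat u (theta M u Pp Pm) := by
  rw [theta, sat_disj]
  rintro ⟨φ, hφ, hs⟩
  simp only [List.mem_append, List.mem_map, Finset.mem_toList] at hφ
  rcases hφ with ⟨q, _, rfl⟩ | ⟨q, _, rfl⟩ <;> split at hs <;> simp_all [KModel.Sat]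

lemma theta_of_not_char (M0 M1 : KModel) (u0 : M0.W) (u1 : M1.W) (Pp Pm : Finset ℕ)
    (h : ¬ ((∀ p ∈ Pp, M0.val u0 p → M1.val u1 p) ∧ (∀ p ∈ Pm, M1.val u1 p → M0.val u0 p))) :
    M0.Sat u0 (theta M1 u1 Pp Pm) := by
  rw [theta, sat_disj]
  push_neg at h
  by_cases hc : ∀ p ∈ Pp, M0.val u0 p → M1.val u1 p
  · obtain ⟨p, hp, hv1, hv0⟩ := h hc
    refine ⟨.not (.var p), ?_, ?_⟩
    · simp only [List.mem_append, List.mem_map, Finset.mem_toList]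
      exact Or.inr ⟨p, hp, by simp [hv1]⟩
    · exact hv0
  · push_neg at hc
    obtain ⟨p, hp, hv0, hv1⟩ := hc
    refine ⟨.var p, ?_, ?_⟩
    · simp only [List.mem_append, List.mem_map, Finset.mem_toList]
      exact Or.inl ⟨p, hp, by simp [hv1]⟩
    · exact hv0

theorem stmt4 (Pp Pm : Finset ℕ) (M0 M1 : KModel) (w0 : M0.W) (w1 : M1.W)
    (h0 : M0.Final w0) (h1 : M1.Final w1)
    (h : ModalArrow Pp Pm 1 M0 w0 M1 w1) :
    Matches Pp Pm M0 M1 (M0.cluster w0) (M1.cluster w1) := by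
  constructor
  · -- forward direction, via ◇(chi M0 u0 Pp Pm)(u0)
    rintro u0 ⟨hr0, hr0'⟩
    have hsat0 : M0.Sat w0 (ModalForm.not (.box (.not (chi M0 u0 Pp Pm)))) := by
      intro hb
      exact hb u0 hr0 (chi_self M0 u0 Pp Pm)
    have hsat1 : M1.Sat w1 (ModalForm.not (.box (.not (chi M0 u0 Pp Pm)))) := by
      apply h _ _ _ _ hsat0
      · show (chi M0 u0 Pp Pm).vpos ⊆ Pp; exact chi_vpos M0 u0 Pp Pm
      · show (chi M0 u0 Pp Pm).vneg ⊆ Pm; exact chi_vneg M0 u0 Pp Pm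
      · show (chi M0 u0 Pp Pm).depth + 1 ≤ 1
        rw [chi_depth]
    simp only [KModel.Sat, not_forall] at hsat1
    obtain ⟨u1, hr1, hs1⟩ := hsat1
    rw [not_not] at hs1
    obtain ⟨hp, hn⟩ := chi_spec M0 M1 u0 u1 Pp Pm hs1
    exact ⟨u1, ⟨hr1, h1 u1 hr1⟩, arrow0_of_char M0 M1 u0 u1 Pp Pm hp hn⟩
  · -- backward direction, via □(theta M1 u1 Pp Pm)(u1)
    rintro u1 ⟨hr1, hr1'⟩
    by_contra hcon
    push_neg at hcon
    have hchar : ∀ u0 ∈ M0.cluster w0,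
        ¬ ((∀ p ∈ Pp, M0.val u0 p → M1.val u1 p) ∧ (∀ p ∈ Pm, M1.val u1 p → M0.val u0 p)) := by
      intro u0 hu0 hc
      exact hcon u0 hu0 (arrow0_of_char M0 M1 u0 u1 Pp Pm hc.1 hc.2)
    have hsat0 : M0.Sat w0 (ModalForm.box (theta M1 u1 Pp Pm)) := by
      intro y hy
      exact theta_of_not_char M0 M1 y u1 Pp Pm (hchar y ⟨hy, h0 y hy⟩)
    have hsat1 : M1.Sat w1 (ModalForm.box (theta M1 u1 Pp Pm)) := by
      apply h _ _ _ _ hsat0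
      · show (theta M1 u1 Pp Pm).vpos ⊆ Pp; exact theta_vpos M1 u1 Pp Pm
      · show (theta M1 u1 Pp Pm).vneg ⊆ Pm; exact theta_vneg M1 u1 Pp Pm
      · show (theta M1 u1 Pp Pm).depth + 1 ≤ 1
        rw [theta_depth]
    exact theta_not_self M1 u1 Pp Pm (hsat1 u1 hr1)
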